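/- If {(c_r, φ_r)}_{r=1}^R is an (M+1)-copy CSS in ℂ^d, then for every density matrix ρ supported on Sym^M(ℂ^d), the measure-and-prepare map yields single-copy output Tr_{M-1}[Σ_r d_M^+ c_r Tr(|φ_r⟩⟨φ_r|^{⊗M} ρ) · |φ_r⟩⟨φ_r|^{⊗M}] = (M/(M+d)) ρ^{(1)} + (1/(M+d)) I_d, where ρ^{(1)} = Tr_{M-1}[ρ]. -/

import Mathlib

open scoped BigOperators

/-- `M`-fold tensor power `|φ⟩^{⊗M}` of a vector `φ ∈ ℂ^d`, as a vector on the
computational product basis `Fin M → Fin d`. -/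
noncomputable def vecPow {d : ℕ} (M : ℕ) (φ : Fin d → ℂ) : (Fin M → Fin d) → ℂ :=
  fun f => ∏ i, φ (f i)

/-- Rank-one operator `|v⟩⟨v|`. -/
noncomputable def projOp {n : Type*} [Fintype n] (v : n → ℂ) : Matrix n n ℂ :=
  Matrix.of fun i j => v i * star (v j)

/-- The orthogonal projector `P_+^M` onto the symmetric subspace of `(ℂ^d)^{⊗M}`. -/
noncomputable def symProj (d M : ℕ) : Matrix (Fin M → Fin d) (Fin M → Fin d) ℂ :=
  Matrix.of fun f g =>
    (∑ σ : Equiv.Perm (Fin M), if f = g ∘ σ then (1 : ℂ) else 0) / (Nat.factorial M : ℂ)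

/-- `d_M^+ = C(M+d-1, M)`, the dimension of the symmetric subspace. -/
def dPlus (d M : ℕ) : ℕ := (M + d - 1).choose M

open scoped ComplexOrder

section Aux
variable {d : ℕ}

private lemma comp_eq_iff {K : ℕ} (τ σ : Equiv.Perm (Fin K)) (u x : Fin K → Fin d) :
    u ∘ ⇑τ = x ∘ ⇑σ ↔ u = x ∘ ⇑(σ * τ⁻¹) := by
  constructor <;> intro h <;> funext i
  · have := congrFun h (τ⁻¹ i)
    simpa using this
  · have := congrFun h (τ i)
    simpa using this

private lemma symProj_comp_left {K : ℕ} (τ : Equiv.Perm (Fin K)) (u x : Fin K → Fin d) :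
    symProj d K (u ∘ ⇑τ) x = symProj d K u x := by
  unfold symProj
  simp only [Matrix.of_apply]
  congr 1
  refine Fintype.sum_equiv (Equiv.mulRight τ⁻¹) _ _ fun σ => ?_
  simp only [Equiv.coe_mulRight]
  rw [if_congr (comp_eq_iff τ σ u x) rfl rfl]
  exact if_congr Iff.rfl rfl rfl

private lemma symProj_comp_right {K : ℕ} (τ : Equiv.Perm (Fin K)) (u x : Fin K → Fin d) :
    symProj d K u (x ∘ ⇑τ) = symProj d K u x := by
  unfold symProj
  simp only [Matrix.of_apply]
  congr 1
  refine Fintype.sum_equiv (Equiv.mulLeft τ) _ _ fun σ => ?_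
  simp only [Equiv.coe_mulLeft, Equiv.Perm.coe_mul]
  rw [Function.comp_assoc]
  exact if_congr Iff.rfl rfl rfl

private lemma mul_left_row {K : ℕ} (A : Matrix (Fin K → Fin d) (Fin K → Fin d) ℂ)
    (τ : Equiv.Perm (Fin K)) (u v : Fin K → Fin d) :
    (symProj d K * A) (u ∘ ⇑τ) v = (symProj d K * A) u v := by
  rw [Matrix.mul_apply, Matrix.mul_apply]
  exact Finset.sum_congr rfl fun x _ => by rw [symProj_comp_left]

private lemma mul_right_col {K : ℕ} (A : Matrix (Fin K → Fin d) (Fin K → Fin d) ℂ)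
    (τ : Equiv.Perm (Fin K)) (u v : Fin K → Fin d) :
    (A * symProj d K) u (v ∘ ⇑τ) = (A * symProj d K) u v := by
  rw [Matrix.mul_apply, Matrix.mul_apply]
  exact Finset.sum_congr rfl fun x _ => by rw [symProj_comp_right]

private lemma rho_comp_left {M : ℕ} {ρ : Matrix (Fin (M+1) → Fin d) (Fin (M+1) → Fin d) ℂ}
    (hρsym : symProj d (M+1) * ρ * symProj d (M+1) = ρ)
    (τ : Equiv.Perm (Fin (M+1))) (u v : Fin (M+1) → Fin d) :
    ρ (u ∘ ⇑τ) v = ρ u v := by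
  have h2 : ρ = symProj d (M+1) * (ρ * symProj d (M+1)) := by rw [← mul_assoc, hρsym]
  rw [h2]
  exact mul_left_row _ τ u v

private lemma rho_comp_right {M : ℕ} {ρ : Matrix (Fin (M+1) → Fin d) (Fin (M+1) → Fin d) ℂ}
    (hρsym : symProj d (M+1) * ρ * symProj d (M+1) = ρ)
    (τ : Equiv.Perm (Fin (M+1))) (u v : Fin (M+1) → Fin d) :
    ρ u (v ∘ ⇑τ) = ρ u v := by
  have h2 : ρ = (symProj d (M+1) * ρ) * symProj d (M+1) := hρsym.symm
  rw [h2]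
  exact mul_right_col _ τ u v

private lemma sum_fun_succ {n : ℕ} (F : (Fin (n+1) → Fin d) → ℂ) :
    ∑ w : Fin (n+1) → Fin d, F w = ∑ x : Fin d, ∑ h : Fin n → Fin d, F (Fin.cons x h) := by
  rw [← Equiv.sum_comp (Fin.consEquiv fun _ => Fin d) F, Fintype.sum_prod_type]
  rfl

private lemma sum_prod_eq_pow {n : ℕ} (F : Fin d → ℂ) :
    ∑ h : Fin n → Fin d, ∏ i, F (h i) = (∑ j, F j) ^ n := by
  induction n with
  | zero => simp
  | succ n ih =>
    rw [sum_fun_succ (fun h => ∏ i, F (h i))]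
    simp only [Fin.prod_univ_succ, Fin.cons_zero, Fin.cons_succ]
    calc ∑ x : Fin d, ∑ h : Fin n → Fin d, F x * ∏ i, F (h i)
        = ∑ x : Fin d, F x * ∑ h : Fin n → Fin d, ∏ i, F (h i) := by
          exact Finset.sum_congr rfl fun x _ => (Finset.mul_sum _ _ _).symm
      _ = (∑ j, F j) ^ (n+1) := by
          rw [ih, ← Finset.sum_mul, pow_succ, mul_comm]

private lemma sum_if_cons {n : ℕ} (a : Fin d) (X : Fin (n+1) → Fin d)
    (G : (Fin n → Fin d) → ℂ) :
    ∑ f : Fin n → Fin d, (if Fin.cons a f = X then (1:ℂ) else 0) * G f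
      = if X 0 = a then G (Fin.tail X) else 0 := by
  have h : ∀ f : Fin n → Fin d, (Fin.cons a f = X) ↔ (X 0 = a ∧ f = Fin.tail X) := by
    intro f
    constructor
    · intro h
      rw [← h]
      exact ⟨rfl, funext fun i => rfl⟩
    · rintro ⟨h1, h2⟩
      rw [h2, ← h1]
      exact Fin.cons_self_tail X
  simp only [h]
  by_cases hX : X 0 = a
  · simp only [hX, true_and, ite_mul, one_mul, zero_mul, if_true]
    rw [Finset.sum_ite_eq' Finset.univ (Fin.tail X) G]
    simp
  · simp [hX]

private lemma T_eval {M : ℕ} {ρ : Matrix (Fin (M+1) → Fin d) (Fin (M+1) → Fin d) ℂ}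
    (hL : ∀ (τ : Equiv.Perm (Fin (M+1))) u v, ρ (u ∘ ⇑τ) v = ρ u v)
    (hR : ∀ (τ : Equiv.Perm (Fin (M+1))) u v, ρ u (v ∘ ⇑τ) = ρ u v)
    (htr : ρ.trace = 1)
    (a b : Fin d) (p : Fin (M+2)) (e : Equiv.Perm (Fin (M+1))) :
    ∑ f : Fin (M+1) → Fin d, ∑ g : Fin (M+1) → Fin d,
        (if Fin.cons a f = Fin.cons b g ∘ ⇑(Equiv.Perm.decomposeFin.symm (p, e)) then (1:ℂ) else 0) * ρ g f
      = if p = 0 then (if a = b then 1 else 0)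
        else ∑ h : Fin M → Fin d, ρ (Fin.cons a h) (Fin.cons b h) := by
  set σ := Equiv.Perm.decomposeFin.symm (p, e) with hσ
  rw [Finset.sum_comm]
  have step1 : ∀ g : Fin (M+1) → Fin d,
      ∑ f : Fin (M+1) → Fin d, (if Fin.cons a f = Fin.cons b g ∘ ⇑σ then (1:ℂ) else 0) * ρ g f
      = if (Fin.cons b g ∘ ⇑σ) 0 = a then ρ g (Fin.tail (Fin.cons b g ∘ ⇑σ)) else 0 := by
    intro g
    exact sum_if_cons a (Fin.cons b g ∘ ⇑σ) (ρ g)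
  simp only [step1]
  induction p using Fin.cases with
  | zero =>
    have hzero : ∀ g : Fin (M+1) → Fin d, (Fin.cons b g ∘ ⇑σ) 0 = b := by
      intro g
      simp [hσ]
    have htail : ∀ g : Fin (M+1) → Fin d, Fin.tail (Fin.cons b g ∘ ⇑σ) = g ∘ ⇑e := by
      intro g
      funext m
      simp [Fin.tail, hσ, Equiv.Perm.decomposeFin_symm_apply_succ]
    simp only [hzero, htail, hR e]
    by_cases hab : b = a
    · simp only [hab, if_pos rfl, if_pos rfl]
      rw [← htr]
      rfl
    · simp [hab, Ne.symm hab]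
  | succ q =>
    have hzero : ∀ g : Fin (M+1) → Fin d, (Fin.cons b g ∘ ⇑σ) 0 = g q := by
      intro g
      simp [hσ]
    have htail : ∀ g : Fin (M+1) → Fin d,
        Fin.tail (Fin.cons b g ∘ ⇑σ) = (Function.update g q b) ∘ ⇑e := by
      intro g
      funext m
      simp only [Fin.tail, Function.comp_apply, hσ,
        Equiv.Perm.decomposeFin_symm_apply_succ]
      by_cases he : e m = q
      · rw [he, Equiv.swap_apply_right, Fin.cons_zero, Function.update_self]
      · rw [Equiv.swap_apply_of_ne_of_ne (Fin.succ_ne_zero _) (by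
          simpa [Fin.succ_inj] using he), Fin.cons_succ, Function.update_of_ne he]
    simp only [hzero, htail, hR e, if_neg (Fin.succ_ne_zero q)]
    have swapstep : ∑ g : Fin (M+1) → Fin d,
        (if g q = a then ρ g (Function.update g q b) else 0)
        = ∑ w : Fin (M+1) → Fin d, (if w 0 = a then ρ w (Function.update w 0 b) else 0) := by
      refine (Fintype.sum_equiv (Equiv.arrowCongr (Equiv.swap (0 : Fin (M+1)) q) (Equiv.refl (Fin d))).symm _ _ fun w => ?_).symm
      have hEw : (Equiv.arrowCongr (Equiv.swap (0 : Fin (M+1)) q) (Equiv.refl (Fin d))).symm w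
          = w ∘ ⇑(Equiv.swap (0 : Fin (M+1)) q) := by
        funext j
        simp [Equiv.arrowCongr]
      rw [hEw]
      have h1 : (w ∘ ⇑(Equiv.swap (0 : Fin (M+1)) q)) q = w 0 := by
        simp [Equiv.swap_apply_right]
      have h2 : Function.update (w ∘ ⇑(Equiv.swap (0 : Fin (M+1)) q)) q b
          = (Function.update w 0 b) ∘ ⇑(Equiv.swap (0 : Fin (M+1)) q) := by
        funext j
        by_cases hj : j = q
        · subst hj
          rw [Function.update_self, Function.comp_apply, Equiv.swap_apply_right,
            Function.update_self]
        · rw [Function.update_of_ne hj, Function.comp_apply, Function.comp_apply,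
            Function.update_of_ne (fun hc => hj (by
              have := congrArg (Equiv.swap (0 : Fin (M+1)) q) hc
              simpa [Equiv.swap_apply_left] using this))]
      rw [h1, h2, hL (Equiv.swap (0 : Fin (M+1)) q), hR (Equiv.swap (0 : Fin (M+1)) q)]
    rw [swapstep, sum_fun_succ (fun w => if w 0 = a then ρ w (Function.update w 0 b) else 0)]
    simp only [Fin.cons_zero, Fin.update_cons_zero]
    have hpull : ∀ x : Fin d, (∑ h : Fin M → Fin d,
        if x = a then ρ (Fin.cons x h) (Fin.cons b h) else 0)
        = if x = a then ∑ h : Fin M → Fin d, ρ (Fin.cons x h) (Fin.cons b h) else 0 := by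
      intro x
      by_cases hx : x = a <;> simp [hx]
    simp only [hpull]
    rw [Finset.sum_ite_eq' Finset.univ a (fun x => ∑ h : Fin M → Fin d, ρ (Fin.cons x h) (Fin.cons b h))]
    simp

private lemma key_sum {M : ℕ} {ρ : Matrix (Fin (M+1) → Fin d) (Fin (M+1) → Fin d) ℂ}
    (hL : ∀ (τ : Equiv.Perm (Fin (M+1))) u v, ρ (u ∘ ⇑τ) v = ρ u v)
    (hR : ∀ (τ : Equiv.Perm (Fin (M+1))) u v, ρ u (v ∘ ⇑τ) = ρ u v)
    (htr : ρ.trace = 1) (a b : Fin d) :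
    ∑ σ : Equiv.Perm (Fin (M+2)), ∑ f : Fin (M+1) → Fin d, ∑ g : Fin (M+1) → Fin d,
        (if Fin.cons a f = Fin.cons b g ∘ ⇑σ then (1:ℂ) else 0) * ρ g f
      = (Nat.factorial (M+1) : ℂ) * ((if a = b then 1 else 0)
          + ((M+1 : ℕ) : ℂ) * ∑ h : Fin M → Fin d, ρ (Fin.cons a h) (Fin.cons b h)) := by
  rw [← Equiv.sum_comp (Equiv.Perm.decomposeFin.symm :
    Fin (M+2) × Equiv.Perm (Fin (M+1)) ≃ Equiv.Perm (Fin (M+2)))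
    (fun σ => ∑ f : Fin (M+1) → Fin d, ∑ g : Fin (M+1) → Fin d,
      (if Fin.cons a f = Fin.cons b g ∘ ⇑σ then (1:ℂ) else 0) * ρ g f)]
  rw [Fintype.sum_prod_type]
  simp only [T_eval hL hR htr a b]
  set A := (if a = b then (1:ℂ) else 0) with hA
  set B := ∑ h : Fin M → Fin d, ρ (Fin.cons a h) (Fin.cons b h) with hB
  have hconst : ∀ p : Fin (M+2), ∑ _e : Equiv.Perm (Fin (M+1)), (if p = 0 then A else B)
      = (Nat.factorial (M+1) : ℂ) * (if p = 0 then A else B) := by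
    intro p
    rw [Finset.sum_const, Finset.card_univ, Fintype.card_perm, Fintype.card_fin,
      nsmul_eq_mul]
  simp only [hconst]
  rw [← Finset.mul_sum]
  congr 1
  have hsplit : ∀ p : Fin (M+2), (if p = 0 then A else B)
      = B + (if p = 0 then A - B else 0) := by
    intro p
    by_cases hp : p = 0 <;> simp [hp]
  simp only [hsplit]
  rw [Finset.sum_add_distrib, Finset.sum_const, Finset.card_univ, Fintype.card_fin,
    Finset.sum_ite_eq' Finset.univ (0 : Fin (M+2)) (fun _ => A - B)]
  simp only [Finset.mem_univ, if_true, nsmul_eq_mul]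
  push_cast
  ring

end Aux


/-- Single-copy output of the measure-and-prepare scheme built from an
`(M+2)`-copy CSS acting on a density matrix `ρ` supported on `Sym^{M+1}(ℂ^d)`:
`Tr_{M}[Σ_r d_{M+1}^+ c_r Tr(|φ_r⟩⟨φ_r|^{⊗(M+1)} ρ) |φ_r⟩⟨φ_r|^{⊗(M+1)}]
  = ((M+1)/(M+1+d)) ρ^{(1)} + (1/(M+1+d)) I_d`.
(The paper's statement with input copy number `M ≥ 1`, written with `M+1`.) -/
theorem css_measure_prepare_single_copy (d M R : ℕ)
    (φ : Fin R → Fin d → ℂ) (c : Fin R → ℝ)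
    (hunit : ∀ r, ∑ j, φ r j * star (φ r j) = 1)
    (hc : ∀ r, 0 ≤ c r)
    (hCSS : ∑ r, (c r : ℂ) • projOp (vecPow (M + 2) (φ r))
      = ((dPlus d (M + 2) : ℂ))⁻¹ • symProj d (M + 2))
    (ρ : Matrix (Fin (M + 1) → Fin d) (Fin (M + 1) → Fin d) ℂ)
    (hρpos : ρ.PosSemidef) (hρtr : ρ.trace = 1)
    (hρsym : symProj d (M + 1) * ρ * symProj d (M + 1) = ρ) :
    (Matrix.of fun a b : Fin d =>
        ∑ h : Fin M → Fin d,
          (∑ r, ((dPlus d (M + 1) : ℂ) * (c r : ℂ) *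
              Matrix.trace (projOp (vecPow (M + 1) (φ r)) * ρ)) •
            projOp (vecPow (M + 1) (φ r)))
          (Fin.cons a h) (Fin.cons b h))
      = (((M + 1 : ℕ) : ℂ) / ((M + 1 + d : ℕ) : ℂ)) •
          (Matrix.of fun a b : Fin d => ∑ h : Fin M → Fin d, ρ (Fin.cons a h) (Fin.cons b h))
        + (((M + 1 + d : ℕ) : ℂ))⁻¹ • (1 : Matrix (Fin d) (Fin d) ℂ) := by
  rcases Nat.eq_zero_or_pos d with hd | hd
  · subst hd
    ext a b
    exact a.elim0
  have hL := rho_comp_left hρsym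
  have hR := rho_comp_right hρsym
  -- splitting of tensor powers along `Fin.cons`
  have hsplit2 : ∀ (r : Fin R) (x : Fin d) (f : Fin (M+1) → Fin d),
      vecPow (M+2) (φ r) (Fin.cons x f) = φ r x * vecPow (M+1) (φ r) f := by
    intro r x f
    unfold vecPow
    rw [Fin.prod_univ_succ]
    simp
  have hsplit1 : ∀ (r : Fin R) (x : Fin d) (h : Fin M → Fin d),
      vecPow (M+1) (φ r) (Fin.cons x h) = φ r x * ∏ i, φ r (h i) := by
    intro r x h
    unfold vecPow
    rw [Fin.prod_univ_succ]
    simp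
  ext a b
  -- S1 : collapse the prepared copies
  have S1 : ∀ r : Fin R, (∑ h : Fin M → Fin d,
      vecPow (M+1) (φ r) (Fin.cons a h) * star (vecPow (M+1) (φ r) (Fin.cons b h)))
      = φ r a * star (φ r b) := by
    intro r
    have hterm : ∀ h : Fin M → Fin d,
        vecPow (M+1) (φ r) (Fin.cons a h) * star (vecPow (M+1) (φ r) (Fin.cons b h))
        = (φ r a * star (φ r b)) * ∏ i, (φ r (h i) * star (φ r (h i))) := by
      intro h
      rw [hsplit1 r a h, hsplit1 r b h, star_mul', star_prod, mul_mul_mul_comm,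
        ← Finset.prod_mul_distrib]
    simp only [hterm]
    rw [← Finset.mul_sum, sum_prod_eq_pow (fun j => φ r j * star (φ r j)), hunit r, one_pow, mul_one]
  -- S2 : the trace as an explicit double sum
  have S2 : ∀ r : Fin R, Matrix.trace (projOp (vecPow (M + 1) (φ r)) * ρ)
      = ∑ f : Fin (M+1) → Fin d, ∑ g : Fin (M+1) → Fin d,
          vecPow (M+1) (φ r) f * star (vecPow (M+1) (φ r) g) * ρ g f := by
    intro r
    rw [Matrix.trace]
    simp only [Matrix.diag, Matrix.mul_apply, projOp, Matrix.of_apply]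
  -- entrywise form of the CSS hypothesis
  have hE : ∀ u v : Fin (M+2) → Fin d,
      (∑ r, (c r : ℂ) * (vecPow (M + 2) (φ r) u * star (vecPow (M + 2) (φ r) v)))
      = ((dPlus d (M + 2) : ℂ))⁻¹ * symProj d (M + 2) u v := by
    intro u v
    have h1 := congrFun (congrFun (congrArg (fun (X : Matrix (Fin (M+2) → Fin d) (Fin (M+2) → Fin d) ℂ) => (X : (Fin (M+2) → Fin d) → (Fin (M+2) → Fin d) → ℂ)) hCSS) u) v
    simpa [Matrix.sum_apply, Matrix.smul_apply, projOp, smul_eq_mul, mul_assoc] using h1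
  have hproj : ∀ (r : Fin R) (u v : Fin (M+1) → Fin d),
      projOp (vecPow (M+1) (φ r)) u v
      = vecPow (M+1) (φ r) u * star (vecPow (M+1) (φ r) v) := fun r u v => rfl
  simp only [Matrix.of_apply, Matrix.add_apply, Matrix.smul_apply, Matrix.one_apply,
    smul_eq_mul, Matrix.sum_apply, hproj]
  rw [Finset.sum_comm]
  calc ∑ r : Fin R, ∑ h : Fin M → Fin d,
        (dPlus d (M + 1) : ℂ) * (c r : ℂ) * Matrix.trace (projOp (vecPow (M + 1) (φ r)) * ρ) *
          (vecPow (M + 1) (φ r) (Fin.cons a h) * star (vecPow (M + 1) (φ r) (Fin.cons b h)))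
      = ∑ r : Fin R,
        ((dPlus d (M + 1) : ℂ) * (c r : ℂ) * Matrix.trace (projOp (vecPow (M + 1) (φ r)) * ρ)) *
          (φ r a * star (φ r b)) := by
        refine Finset.sum_congr rfl fun r _ => ?_
        rw [← Finset.mul_sum, S1 r]
    _ = ∑ r : Fin R, ∑ f : Fin (M+1) → Fin d, ∑ g : Fin (M+1) → Fin d,
          (dPlus d (M + 1) : ℂ) * ((c r : ℂ) *
            (vecPow (M+2) (φ r) (Fin.cons a f) * star (vecPow (M+2) (φ r) (Fin.cons b g))) *
            ρ g f) := by
        refine Finset.sum_congr rfl fun r _ => ?_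
        rw [S2 r]
        simp only [Finset.mul_sum, Finset.sum_mul]
        refine Finset.sum_congr rfl fun f _ => Finset.sum_congr rfl fun g _ => ?_
        rw [hsplit2 r a f, hsplit2 r b g, star_mul']
        ring
    _ = ∑ f : Fin (M+1) → Fin d, ∑ g : Fin (M+1) → Fin d,
          (dPlus d (M + 1) : ℂ) * (((dPlus d (M + 2) : ℂ))⁻¹ *
            symProj d (M + 2) (Fin.cons a f) (Fin.cons b g) * ρ g f) := by
        rw [Finset.sum_comm]
        refine Finset.sum_congr rfl fun f _ => ?_
        rw [Finset.sum_comm]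
        refine Finset.sum_congr rfl fun g _ => ?_
        rw [← hE (Fin.cons a f) (Fin.cons b g), Finset.sum_mul, Finset.mul_sum]
    _ = ∑ σ : Equiv.Perm (Fin (M+2)), ∑ f : Fin (M+1) → Fin d, ∑ g : Fin (M+1) → Fin d,
          ((dPlus d (M + 1) : ℂ) * ((dPlus d (M + 2) : ℂ))⁻¹ * ((Nat.factorial (M+2) : ℂ))⁻¹) *
            ((if Fin.cons a f = Fin.cons b g ∘ ⇑σ then (1:ℂ) else 0) * ρ g f) := by
        have hterm : ∀ (f g : Fin (M+1) → Fin d),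
            (dPlus d (M + 1) : ℂ) * (((dPlus d (M + 2) : ℂ))⁻¹ *
              symProj d (M + 2) (Fin.cons a f) (Fin.cons b g) * ρ g f)
            = ∑ σ : Equiv.Perm (Fin (M+2)),
              ((dPlus d (M + 1) : ℂ) * ((dPlus d (M + 2) : ℂ))⁻¹ * ((Nat.factorial (M+2) : ℂ))⁻¹) *
                ((if Fin.cons a f = Fin.cons b g ∘ ⇑σ then (1:ℂ) else 0) * ρ g f) := by
          intro f g
          simp only [symProj, Matrix.of_apply, div_eq_mul_inv, Finset.sum_mul, Finset.mul_sum]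
          refine Finset.sum_congr rfl fun σ _ => ?_
          ring
        simp only [hterm]
        exact (Finset.sum_congr rfl fun f _ => Finset.sum_comm).trans Finset.sum_comm
    _ = ((dPlus d (M + 1) : ℂ) * ((dPlus d (M + 2) : ℂ))⁻¹ * ((Nat.factorial (M+2) : ℂ))⁻¹) *
          ((Nat.factorial (M+1) : ℂ) * ((if a = b then (1:ℂ) else 0)
            + ((M+1 : ℕ) : ℂ) * ∑ h : Fin M → Fin d, ρ (Fin.cons a h) (Fin.cons b h))) := by
        rw [← key_sum hL hR hρtr a b, Finset.mul_sum]
        refine Finset.sum_congr rfl fun σ _ => ?_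
        rw [Finset.mul_sum]
        refine Finset.sum_congr rfl fun f _ => ?_
        rw [Finset.mul_sum]
    _ = ((M + 1 : ℕ) : ℂ) / ((M + 1 + d : ℕ) : ℂ) *
          ∑ h : Fin M → Fin d, ρ (Fin.cons a h) (Fin.cons b h) +
        (((M + 1 + d : ℕ) : ℂ))⁻¹ * (if a = b then (1:ℂ) else 0) := by
        have hid : ((M + 1 + d : ℕ) : ℂ) * (dPlus d (M + 1) : ℂ)
            = ((M + 2 : ℕ) : ℂ) * (dPlus d (M + 2) : ℂ) := by
          have h1 : dPlus d (M + 1) = (M + d).choose (M + 1) := by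
            unfold dPlus; congr 1; omega
          have h2 : dPlus d (M + 2) = (M + d + 1).choose (M + 2) := by
            unfold dPlus; congr 1; omega
          have h3 := Nat.add_one_mul_choose_eq (M + d) (M + 1)
          rw [h1, h2]
          have hnat : (M + 1 + d) * (M + d).choose (M + 1)
              = (M + 2) * (M + d + 1).choose (M + 2) := by
            rw [show M + 1 + d = M + d + 1 from by omega]
            simpa [Nat.succ_eq_add_one, mul_comm, Nat.add_assoc] using h3
          exact_mod_cast congrArg (Nat.cast : ℕ → ℂ) hnat
        have hdP2 : (dPlus d (M + 2) : ℂ) ≠ 0 := by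
          have : 0 < dPlus d (M + 2) := by
            unfold dPlus
            exact Nat.choose_pos (by omega)
          exact_mod_cast this.ne'
        have hfactne : ((Nat.factorial (M + 1) : ℕ) : ℂ) ≠ 0 := by
          exact_mod_cast (Nat.factorial_pos (M + 1)).ne'
        have hMdne : ((M + 1 + d : ℕ) : ℂ) ≠ 0 := by
          exact_mod_cast (by omega : 0 < M + 1 + d).ne'
        have hfact2 : ((Nat.factorial (M + 2) : ℕ) : ℂ)
            = ((M + 2 : ℕ) : ℂ) * ((Nat.factorial (M + 1) : ℕ) : ℂ) := by
          rw [show M + 2 = (M + 1) + 1 by rfl, Nat.factorial_succ]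
          push_cast
          ring
        have hM2ne : ((M + 2 : ℕ) : ℂ) ≠ 0 := by
          exact_mod_cast (by omega : 0 < M + 2).ne'
        rw [hfact2]
        have h4 : (dPlus d (M + 1) : ℂ) * ((dPlus d (M + 2) : ℂ))⁻¹ *
              (((M + 2 : ℕ) : ℂ) * ((Nat.factorial (M + 1) : ℕ) : ℂ))⁻¹ *
              ((Nat.factorial (M + 1) : ℕ) : ℂ)
            = (((M + 1 + d : ℕ) : ℂ))⁻¹ := by
          push_cast at hid ⊢
          field_simp
          linear_combination hid
        calc (dPlus d (M + 1) : ℂ) * ((dPlus d (M + 2) : ℂ))⁻¹ *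
              (((M + 2 : ℕ) : ℂ) * ((Nat.factorial (M + 1) : ℕ) : ℂ))⁻¹ *
              ((Nat.factorial (M + 1) : ℂ) * ((if a = b then (1:ℂ) else 0)
                + ((M + 1 : ℕ) : ℂ) * ∑ h : Fin M → Fin d, ρ (Fin.cons a h) (Fin.cons b h)))
            = ((dPlus d (M + 1) : ℂ) * ((dPlus d (M + 2) : ℂ))⁻¹ *
                (((M + 2 : ℕ) : ℂ) * ((Nat.factorial (M + 1) : ℕ) : ℂ))⁻¹ *
                ((Nat.factorial (M + 1) : ℕ) : ℂ)) *
              ((if a = b then (1:ℂ) else 0)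
                + ((M + 1 : ℕ) : ℂ) * ∑ h : Fin M → Fin d, ρ (Fin.cons a h) (Fin.cons b h)) := by
              push_cast
              ring
          _ = (((M + 1 + d : ℕ) : ℂ))⁻¹ *
              ((if a = b then (1:ℂ) else 0)
                + ((M + 1 : ℕ) : ℂ) * ∑ h : Fin M → Fin d, ρ (Fin.cons a h) (Fin.cons b h)) := by
              rw [h4]
          _ = ((M + 1 : ℕ) : ℂ) / ((M + 1 + d : ℕ) : ℂ) *
                ∑ h : Fin M → Fin d, ρ (Fin.cons a h) (Fin.cons b h) +
              (((M + 1 + d : ℕ) : ℂ))⁻¹ * (if a = b then (1:ℂ) else 0) := by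
              rw [div_eq_mul_inv]
              ring
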